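/- Let G be a finite directed graph. The collection of (arc sets of) all directed spanning trees of G satisfies the weak exchange property: for every pair of distinct directed spanning trees T and T' of G, there exist an arc e ∈ A(T) \ A(T') and an arc e' ∈ A(T') \ A(T) such that T − e + e' is a directed spanning tree of G. -/

import Mathlib

/-- The vertex set of a set of arcs. -/
def arcVerts {V : Type*} [DecidableEq V] (T : Finset (V × V)) : Finset V :=
  T.image Prod.fst ∪ T.image Prod.snd

/-- The in-degree of a vertex `v` in a set of arcs `T`. -/
def inDeg {V : Type*} [DecidableEq V] (T : Finset (V × V)) (v : V) : ℕ :=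
  (T.filter fun e => e.2 = v).card

/-- The step relation of a set of arcs: `arcRel T a b` iff `(a, b)` is an arc of `T`. -/
def arcRel {V : Type*} (T : Finset (V × V)) : V → V → Prop := fun a b => (a, b) ∈ T

/-- `T` is (the arc set of) a directed tree rooted at `r`: the root has in-degree `0`,
every other vertex has in-degree exactly `1`, and every vertex is reachable from `r`. -/
def IsDirTree {V : Type*} [DecidableEq V] (T : Finset (V × V)) (r : V) : Prop :=
  inDeg T r = 0 ∧ (∀ v ∈ arcVerts T, v ≠ r → inDeg T v = 1) ∧
    ∀ v ∈ arcVerts T, Relation.ReflTransGen (arcRel T) r v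

/-- `T` is a directed spanning tree of the digraph on vertex type `V` with arc set `A`. -/
def IsDirSpanningTree {V : Type*} [DecidableEq V] (A T : Finset (V × V)) : Prop :=
  T ⊆ A ∧ ∃ r, IsDirTree T r ∧ ∀ v, v ≠ r → v ∈ arcVerts T

section Aux

variable {V : Type*} [DecidableEq V]

lemma reach_mono' {S T : Finset (V × V)} (h : S ⊆ T) {a b : V}
    (hab : Relation.ReflTransGen (arcRel S) a b) :
    Relation.ReflTransGen (arcRel T) a b :=
  by
  induction hab with
  | refl => exact Relation.ReflTransGen.refl
  | tail _ hx ih => exact ih.tail (h hx)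

lemma snd_mem_arcVerts' {T : Finset (V × V)} {e : V × V} (h : e ∈ T) : e.2 ∈ arcVerts T :=
  Finset.mem_union.2 (Or.inr (Finset.mem_image_of_mem _ h))

lemma no_in_arc' {T : Finset (V × V)} {r : V} (h0 : inDeg T r = 0) {a : V}
    (ha : (a, r) ∈ T) : False := by
  have hmem : (a, r) ∈ T.filter fun e => e.2 = r := Finset.mem_filter.2 ⟨ha, rfl⟩
  rw [inDeg, Finset.card_eq_zero] at h0
  rw [h0] at hmem
  exact absurd hmem (Finset.notMem_empty _)

lemma parent_unique' {T : Finset (V × V)} {v a b : V} (h1 : inDeg T v = 1)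
    (ha : (a, v) ∈ T) (hb : (b, v) ∈ T) : a = b := by
  obtain ⟨e0, he0⟩ := Finset.card_eq_one.mp h1
  have ha' : (a, v) ∈ T.filter fun e => e.2 = v := Finset.mem_filter.2 ⟨ha, rfl⟩
  have hb' : (b, v) ∈ T.filter fun e => e.2 = v := Finset.mem_filter.2 ⟨hb, rfl⟩
  rw [he0, Finset.mem_singleton] at ha' hb'
  have := ha'.trans hb'.symm
  exact (Prod.mk.injEq _ _ _ _).mp this |>.1

lemma exists_parent' {T : Finset (V × V)} {v : V} (h1 : inDeg T v = 1) :
    ∃ a, (a, v) ∈ T := by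
  obtain ⟨e0, he0⟩ := Finset.card_eq_one.mp h1
  have : e0 ∈ T.filter fun e => e.2 = v := he0 ▸ Finset.mem_singleton_self e0
  obtain ⟨hmem, hsnd⟩ := Finset.mem_filter.mp this
  exact ⟨e0.1, by rwa [show (e0.1, v) = e0 by rw [← hsnd]]⟩

lemma inDeg_insert_of_ne' {S : Finset (V × V)} {e : V × V} {x : V} (h : e.2 ≠ x) :
    inDeg (insert e S) x = inDeg S x := by
  unfold inDeg
  rw [Finset.filter_insert, if_neg h]

lemma inDeg_insert_self' {S : Finset (V × V)} {e : V × V} (hm : e ∉ S) :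
    inDeg (insert e S) e.2 = inDeg S e.2 + 1 := by
  unfold inDeg
  rw [Finset.filter_insert, if_pos rfl,
    Finset.card_insert_of_notMem (fun hc => hm (Finset.mem_filter.mp hc).1)]

lemma inDeg_erase_of_ne' {S : Finset (V × V)} {e : V × V} {x : V} (h : e.2 ≠ x) :
    inDeg (S.erase e) x = inDeg S x := by
  unfold inDeg
  congr 1
  ext a
  simp only [Finset.mem_filter, Finset.mem_erase]
  constructor
  · rintro ⟨⟨_, ha⟩, hax⟩; exact ⟨ha, hax⟩
  · rintro ⟨ha, hax⟩
    exact ⟨⟨fun hae => h (hae ▸ hax), ha⟩, hax⟩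

lemma inDeg_erase_self' {S : Finset (V × V)} {e : V × V} (hm : e ∈ S) :
    inDeg (S.erase e) e.2 + 1 = inDeg S e.2 := by
  unfold inDeg
  have hmf : e ∈ S.filter fun x => x.2 = e.2 := Finset.mem_filter.2 ⟨hm, rfl⟩
  rw [Finset.filter_erase, Finset.card_erase_of_mem hmf]
  exact Nat.succ_pred_eq_of_pos (Finset.card_pos.2 ⟨e, hmf⟩)

lemma good_of_spanning' {A T : Finset (V × V)} (h : IsDirSpanningTree A T) :
    ∃ r, T ⊆ A ∧ inDeg T r = 0 ∧ (∀ v, v ≠ r → inDeg T v = 1) ∧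
      ∀ v, Relation.ReflTransGen (arcRel T) r v := by
  obtain ⟨hTA, r, ⟨h0, h1, h2⟩, hsp⟩ := h
  refine ⟨r, hTA, h0, fun v hv => h1 v (hsp v hv) hv, fun v => ?_⟩
  by_cases hv : v = r
  · subst hv; exact Relation.ReflTransGen.refl
  · exact h2 v (hsp v hv)

lemma spanning_of_good' {A N : Finset (V × V)} {ρ : V} (hNA : N ⊆ A)
    (h0 : inDeg N ρ = 0) (h1 : ∀ v, v ≠ ρ → inDeg N v = 1)
    (h2 : ∀ v, Relation.ReflTransGen (arcRel N) ρ v) :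
    IsDirSpanningTree A N := by
  refine ⟨hNA, ρ, ⟨h0, fun v _ hv => h1 v hv, fun v _ => h2 v⟩, fun v hv => ?_⟩
  obtain ⟨a, ha⟩ := exists_parent' (h1 v hv)
  exact snd_mem_arcVerts' ha

lemma card_good' {V : Type*} [Fintype V] [DecidableEq V] {T : Finset (V × V)} {r : V}
    (h0 : inDeg T r = 0) (h1 : ∀ v, v ≠ r → inDeg T v = 1) :
    T.card = Fintype.card V - 1 := by
  have hsum : T.card = ∑ v : V, inDeg T v := by
    rw [Finset.card_eq_sum_card_fiberwise (f := Prod.snd) (t := Finset.univ)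
      (fun x _ => Finset.mem_univ _)]
    rfl
  rw [hsum, ← Finset.sum_erase_add _ _ (Finset.mem_univ r), h0, add_zero]
  rw [Finset.sum_congr rfl (fun v hv => h1 v (Finset.ne_of_mem_erase hv))]
  simp [Finset.card_erase_of_mem]

/-- Number of steps version of reachability. -/
def stepN {V : Type*} (R : V → V → Prop) : ℕ → V → V → Prop
  | 0, a, b => a = b
  | n + 1, a, b => ∃ c, stepN R n a c ∧ R c b

lemma stepN_of_reach' {R : V → V → Prop} {a b : V} (h : Relation.ReflTransGen R a b) :
    ∃ n, stepN R n a b := by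
  induction h with
  | refl => exact ⟨0, rfl⟩
  | tail _ harc ih => obtain ⟨n, hn⟩ := ih; exact ⟨n + 1, _, hn, harc⟩

lemma acyc' {T : Finset (V × V)} {r : V} (h0 : inDeg T r = 0)
    (h1 : ∀ v, v ≠ r → inDeg T v = 1)
    (h2 : ∀ v, Relation.ReflTransGen (arcRel T) r v)
    {x y : V} (hxy : Relation.ReflTransGen (arcRel T) x y) (hyx : (y, x) ∈ T) : False := by
  classical
  have hex : ∀ v, ∃ n, stepN (arcRel T) n r v := fun v => stepN_of_reach' (h2 v)
  set rank : V → ℕ := fun v => Nat.find (hex v) with hrank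
  have hstep : ∀ a b, (a, b) ∈ T → rank a < rank b := by
    intro a b hab
    have hbr : b ≠ r := fun h => no_in_arc' h0 (h ▸ hab)
    have hspec : stepN (arcRel T) (rank b) r b := Nat.find_spec (hex b)
    cases hrb : rank b with
    | zero =>
      rw [hrb] at hspec
      exact absurd hspec.symm hbr
    | succ k =>
      rw [hrb] at hspec
      obtain ⟨c, hc, hcb⟩ := hspec
      have hca : c = a := parent_unique' (h1 b hbr) hcb hab
      subst hca
      have : rank c ≤ k := Nat.find_le hc
      omega
  have mono : ∀ {a b : V}, Relation.ReflTransGen (arcRel T) a b → rank a ≤ rank b := by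
    intro a b h
    induction h with
    | refl => exact le_refl _
    | tail _ harc ih => exact ih.trans (le_of_lt (hstep _ _ harc))
  have h3 := mono hxy
  have h4 := hstep _ _ hyx
  omega

lemma selection' {T T' : Finset (V × V)} {r : V} (hcard : T'.card = T.card) (hne : T ≠ T')
    (h2' : ∀ v, Relation.ReflTransGen (arcRel T') r v) :
    ∃ u v, (u, v) ∈ T' ∧ (u, v) ∉ T ∧ Relation.ReflTransGen (arcRel (T' ∩ T)) r u := by
  by_contra hcon
  push_neg at hcon
  have key : ∀ x, Relation.ReflTransGen (arcRel T') r x →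
      Relation.ReflTransGen (arcRel (T' ∩ T)) r x := by
    intro x hx
    induction hx with
    | refl => exact Relation.ReflTransGen.refl
    | @tail b c hb harc ih =>
      by_cases hmem : (b, c) ∈ T
      · exact ih.tail (Finset.mem_inter.2 ⟨harc, hmem⟩)
      · exact absurd ih (hcon b c harc hmem)
  have hnsub : ¬ T' ⊆ T := fun hsub =>
    hne (Finset.eq_of_subset_of_card_le hsub (le_of_eq hcard.symm)).symm
  obtain ⟨e, heT', heT⟩ := Finset.not_subset.mp hnsub
  exact hcon e.1 e.2 (by simpa using heT') (by simpa using heT) (key e.1 (h2' e.1))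

lemma chain' {T T' : Finset (V × V)} {r : V} (h0 : inDeg T r = 0)
    {x : V} (hx : Relation.ReflTransGen (arcRel T) r x) :
    Relation.ReflTransGen (arcRel (T' ∩ T)) r x ∨
      ∃ w c, w ≠ r ∧ (c, w) ∈ T ∧ (c, w) ∉ T' ∧
        Relation.ReflTransGen (arcRel (T.erase (c, w))) w x := by
  induction hx with
  | refl => exact Or.inl Relation.ReflTransGen.refl
  | @tail b c hb harc ih =>
    by_cases hT' : (b, c) ∈ T'
    · rcases ih with h | ⟨w, d, hw, hdT, hdT', hreach⟩
      · exact Or.inl (h.tail (Finset.mem_inter.2 ⟨hT', harc⟩))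
      · refine Or.inr ⟨w, d, hw, hdT, hdT', hreach.tail ?_⟩
        exact Finset.mem_erase.2 ⟨fun h => hdT' (h ▸ hT'), harc⟩
    · exact Or.inr ⟨c, b, fun h => no_in_arc' h0 (h ▸ harc), harc, hT',
        Relation.ReflTransGen.refl⟩

lemma reach_new' {T : Finset (V × V)} {e e' : V × V} {r ρ : V}
    (hroot : Relation.ReflTransGen (arcRel (insert e' (T.erase e))) ρ r)
    (htarget : Relation.ReflTransGen (arcRel (insert e' (T.erase e))) ρ e.2)
    {x : V} (hx : Relation.ReflTransGen (arcRel T) r x) :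
    Relation.ReflTransGen (arcRel (insert e' (T.erase e))) ρ x := by
  induction hx with
  | refl => exact hroot
  | @tail b c hb harc ih =>
    by_cases he : (b, c) = e
    · have hc : c = e.2 := by rw [← he]
      exact hc ▸ htarget
    · exact ih.tail (Finset.mem_insert.2 (Or.inr (Finset.mem_erase.2 ⟨he, harc⟩)))

end Aux

/-- The collection of directed spanning trees of a finite digraph satisfies the
weak exchange property. -/
theorem stmt0 {V : Type*} [Fintype V] [DecidableEq V] (A T T' : Finset (V × V))
    (hT : IsDirSpanningTree A T) (hT' : IsDirSpanningTree A T') (hne : T ≠ T') :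
    ∃ e ∈ T \ T', ∃ e' ∈ T' \ T, IsDirSpanningTree A (insert e' (T.erase e)) := by
  classical
  obtain ⟨r, hTA, h0, h1, h2⟩ := good_of_spanning' hT
  obtain ⟨r', hT'A, h0', h1', h2'⟩ := good_of_spanning' hT'
  by_cases hrr : r = r'
  · -- same roots: type A exchange
    subst hrr
    have hcard : T'.card = T.card := by
      rw [card_good' h0' h1', card_good' h0 h1]
    obtain ⟨u, v, huvT', huvT, hru⟩ := selection' hcard hne h2'
    have hvr : v ≠ r := fun h => no_in_arc' h0' (h ▸ huvT')
    obtain ⟨p, hpT⟩ := exists_parent' (h1 v hvr)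
    have hpT' : (p, v) ∉ T' := fun h =>
      huvT ((parent_unique' (h1' v hvr) h huvT') ▸ hpT)
    have heraseSub : T' ∩ T ⊆ T.erase (p, v) := by
      intro x hx
      rw [Finset.mem_inter] at hx
      exact Finset.mem_erase.2 ⟨fun hxe => hpT' (hxe ▸ hx.1), hx.2⟩
    refine ⟨(p, v), Finset.mem_sdiff.2 ⟨hpT, hpT'⟩, (u, v),
      Finset.mem_sdiff.2 ⟨huvT', huvT⟩, ?_⟩
    have he'notmem : (u, v) ∉ T.erase (p, v) := fun h => huvT (Finset.mem_of_mem_erase h)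
    have hN0 : inDeg (insert (u, v) (T.erase (p, v))) r = 0 := by
      rw [inDeg_insert_of_ne' (show ((u, v) : V × V).2 ≠ r from hvr),
        inDeg_erase_of_ne' (show ((p, v) : V × V).2 ≠ r from hvr)]
      exact h0
    have hN1 : ∀ x, x ≠ r → inDeg (insert (u, v) (T.erase (p, v))) x = 1 := by
      intro x hx
      by_cases hxv : x = v
      · subst hxv
        have h5 : inDeg (T.erase (p, x)) x + 1 = inDeg T x :=
          inDeg_erase_self' (S := T) (e := (p, x)) hpT
        rw [h1 x hx] at h5
        have h6 : inDeg (T.erase (p, x)) x = 0 := by omega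
        have h7 : inDeg (insert (u, x) (T.erase (p, x))) x = inDeg (T.erase (p, x)) x + 1 :=
          inDeg_insert_self' (S := T.erase (p, x)) (e := (u, x)) he'notmem
        rw [h7, h6]
      · rw [inDeg_insert_of_ne' (show ((u, v) : V × V).2 ≠ x from fun h => hxv h.symm),
          inDeg_erase_of_ne' (show ((p, v) : V × V).2 ≠ x from fun h => hxv h.symm)]
        exact h1 x hx
    have hNsub : insert (u, v) (T.erase (p, v)) ⊆ A :=
      Finset.insert_subset (hT'A huvT') ((Finset.erase_subset _ _).trans hTA)
    refine spanning_of_good' hNsub hN0 hN1 ?_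
    intro x
    have htarget : Relation.ReflTransGen (arcRel (insert (u, v) (T.erase (p, v)))) r
        ((p, v) : V × V).2 := by
      have hu : Relation.ReflTransGen (arcRel (insert (u, v) (T.erase (p, v)))) r u :=
        reach_mono' (heraseSub.trans (Finset.subset_insert _ _)) hru
      exact hu.tail (Finset.mem_insert_self _ _)
    exact reach_new' Relation.ReflTransGen.refl htarget (h2 x)
  · -- different roots: type B exchange
    have hrvT' : r ∈ arcVerts T' := by
      obtain ⟨a, ha⟩ := exists_parent' (h1' r hrr)
      exact snd_mem_arcVerts' ha
    obtain ⟨q, hqT'⟩ := exists_parent' (h1' r hrr)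
    have hqT : (q, r) ∉ T := fun h => no_in_arc' h0 h
    rcases chain' (T' := T') h0 (h2 q) with hleft | ⟨w, c, hw, hcwT, hcwT', hwq⟩
    · exfalso
      have : Relation.ReflTransGen (arcRel T') r q :=
        reach_mono' (Finset.inter_subset_left) hleft
      exact acyc' h0' h1' h2' this hqT'
    · refine ⟨(c, w), Finset.mem_sdiff.2 ⟨hcwT, hcwT'⟩, (q, r),
        Finset.mem_sdiff.2 ⟨hqT', hqT⟩, ?_⟩
      have he'notmem : (q, r) ∉ T.erase (c, w) := fun h => hqT (Finset.mem_of_mem_erase h)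
      have hN0 : inDeg (insert (q, r) (T.erase (c, w))) w = 0 := by
        rw [inDeg_insert_of_ne' (show ((q, r) : V × V).2 ≠ w from fun h => hw h.symm)]
        have h5 : inDeg (T.erase (c, w)) w + 1 = inDeg T w :=
          inDeg_erase_self' (S := T) (e := (c, w)) hcwT
        rw [h1 w hw] at h5
        omega
      have hN1 : ∀ x, x ≠ w → inDeg (insert (q, r) (T.erase (c, w))) x = 1 := by
        intro x hx
        by_cases hxr : x = r
        · subst hxr
          have h7 : inDeg (insert (q, x) (T.erase (c, w))) x = inDeg (T.erase (c, w)) x + 1 :=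
            inDeg_insert_self' (S := T.erase (c, w)) (e := (q, x)) he'notmem
          rw [h7, inDeg_erase_of_ne' (show ((c, w) : V × V).2 ≠ x from Ne.symm hx), h0]
        · rw [inDeg_insert_of_ne' (show ((q, r) : V × V).2 ≠ x from fun h => hxr h.symm),
            inDeg_erase_of_ne' (show ((c, w) : V × V).2 ≠ x from fun h => hx h.symm)]
          exact h1 x hxr
      have hNsub : insert (q, r) (T.erase (c, w)) ⊆ A :=
        Finset.insert_subset (hT'A hqT') ((Finset.erase_subset _ _).trans hTA)
      refine spanning_of_good' hNsub hN0 hN1 ?_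
      intro x
      have hroot : Relation.ReflTransGen (arcRel (insert (q, r) (T.erase (c, w)))) w r := by
        have hq : Relation.ReflTransGen (arcRel (insert (q, r) (T.erase (c, w)))) w q :=
          reach_mono' (Finset.subset_insert _ _) hwq
        exact hq.tail (Finset.mem_insert_self _ _)
      exact reach_new' hroot Relation.ReflTransGen.refl (h2 x)
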